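/- arXiv:2405.13550 — 4 statements merged into one kernel-verified Lean document; each statement's English description precedes it below -/
import Mathlib

section
/- (Theorem 3.3(a).) Let A and N be bounded linear operators on a complex Hilbert space H, q ∈ ℝ, τ ≥ 0, and let V be a bounded operator satisfying the weak Lyapunov equation for (A, N, q, τ). Suppose w_i, w_j ∈ H and λ_i, λ_j ∈ ℂ satisfy A† w_i = conj(λ_i)·w_i, A† w_j = conj(λ_j)·w_j, and λ_i + conj(λ_j) ≠ 0. Then ⟨w_i, V w_j⟩ = −((λ_i − q)(conj(λ_j) − q)/(λ_i + conj(λ_j)))·e^{λ_i τ}·⟨w_i, N w_j⟩. Moreover, if V₀ is a bounded operator satisfying the weak Lyapunov equation for (A, N, q, 0), then ⟨w_i, V w_j⟩ = e^{λ_i τ}·⟨w_i, V₀ w_j⟩. -/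
local notation "⟪" x ", " y "⟫" => @inner ℂ _ _ x y

/-- A bounded operator `V` satisfies the weak Lyapunov equation for `(A, N, q, τ)` if
`⟨v, A(Vw)⟩ + ⟨v, V(A†w)⟩ = −⟨v, exp(τA)((A − q·I)(N((A† − q·I)w)))⟩` for all `v, w`. -/
def WeakLyapunov {H : Type*} [NormedAddCommGroup H] [InnerProductSpace ℂ H] [CompleteSpace H]
    (A N V : H →L[ℂ] H) (q τ : ℝ) : Prop :=
  ∀ v w : H,
    ⟪v, A (V w)⟫ + ⟪v, V ((ContinuousLinearMap.adjoint A) w)⟫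
      = -⟪v, (NormedSpace.exp ((τ : ℂ) • A))
          ((A - (q : ℂ) • (1 : H →L[ℂ] H))
            (N (((ContinuousLinearMap.adjoint A) - (q : ℂ) • (1 : H →L[ℂ] H)) w)))⟫

lemma exp_apply_eigenvector {H : Type*} [NormedAddCommGroup H] [InnerProductSpace ℂ H]
    [CompleteSpace H] (B : H →L[ℂ] H) (x : H) (c : ℂ) (h : B x = c • x) :
    NormedSpace.exp B x = Complex.exp c • x := by
  have hpow : ∀ n : ℕ, (B ^ n) x = c ^ n • x := by
    intro n
    induction n with
    | zero => simp
    | succ n ih =>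
      rw [pow_succ, pow_succ, ContinuousLinearMap.mul_apply, h, map_smul, ih, smul_smul,
        mul_comm]
  have hs : Summable (fun n : ℕ => ((Nat.factorial n : ℂ))⁻¹ • B ^ n) := NormedSpace.expSeries_summable' B
  have happ : (NormedSpace.exp B) x = ∑' n : ℕ, (((Nat.factorial n : ℂ))⁻¹ • B ^ n) x := by
    rw [NormedSpace.exp_eq_tsum (𝕂 := ℂ)]
    exact (ContinuousLinearMap.apply ℂ H x).map_tsum hs
  rw [happ]
  have : ∀ n : ℕ, (((Nat.factorial n : ℂ))⁻¹ • B ^ n) x = (((Nat.factorial n : ℂ))⁻¹ * c ^ n) • x := by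
    intro n
    rw [ContinuousLinearMap.smul_apply, hpow, smul_smul]
  simp_rw [this]
  have hc : Summable (fun n : ℕ => ((Nat.factorial n : ℂ))⁻¹ * c ^ n) := by
    simpa [smul_eq_mul] using NormedSpace.expSeries_summable' (𝕂 := ℂ) c
  rw [hc.tsum_smul_const x]
  congr 1
  have := congrFun Complex.exp_eq_exp_ℂ c
  rw [this, NormedSpace.exp_eq_tsum (𝕂 := ℂ)]
  simp [smul_eq_mul]

lemma key_formula
    {H : Type*} [NormedAddCommGroup H] [InnerProductSpace ℂ H] [CompleteSpace H]
    (A N V : H →L[ℂ] H) (q : ℝ) (τ : ℝ)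
    (hV : WeakLyapunov A N V q τ)
    (wi wj : H) (li lj : ℂ)
    (hwi : (ContinuousLinearMap.adjoint A) wi = (starRingEnd ℂ) li • wi)
    (hwj : (ContinuousLinearMap.adjoint A) wj = (starRingEnd ℂ) lj • wj)
    (hsum : li + (starRingEnd ℂ) lj ≠ 0) :
    ⟪wi, V wj⟫
        = -((li - (q : ℂ)) * ((starRingEnd ℂ) lj - (q : ℂ)) / (li + (starRingEnd ℂ) lj))
            * Complex.exp (li * (τ : ℂ)) * ⟪wi, N wj⟫ := by
  have h := hV wi wj
  -- left hand side pieces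
  have h1 : ⟪wi, A (V wj)⟫ = li * ⟪wi, V wj⟫ := by
    rw [← ContinuousLinearMap.adjoint_inner_left, hwi, inner_smul_left,
      Complex.conj_conj]
  have h2 : ⟪wi, V ((ContinuousLinearMap.adjoint A) wj)⟫
      = (starRingEnd ℂ) lj * ⟪wi, V wj⟫ := by
    rw [hwj, map_smul, inner_smul_right]
  -- right hand side pieces
  have h3 : ((ContinuousLinearMap.adjoint A) - (q : ℂ) • (1 : H →L[ℂ] H)) wj
      = ((starRingEnd ℂ) lj - (q : ℂ)) • wj := by
    simp [hwj, sub_smul]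
  have hexpadj : ContinuousLinearMap.adjoint (NormedSpace.exp ((τ : ℂ) • A))
      = NormedSpace.exp ((τ : ℂ) • ContinuousLinearMap.adjoint A) := by
    rw [← ContinuousLinearMap.star_eq_adjoint, NormedSpace.star_exp, star_smul,
      ContinuousLinearMap.star_eq_adjoint]
    norm_num
  have hexpwi : (NormedSpace.exp ((τ : ℂ) • ContinuousLinearMap.adjoint A)) wi
      = Complex.exp ((τ : ℂ) * (starRingEnd ℂ) li) • wi := by
    apply exp_apply_eigenvector
    rw [ContinuousLinearMap.smul_apply, hwi, smul_smul]
  have h4 : ∀ y : H, ⟪wi, (NormedSpace.exp ((τ : ℂ) • A)) y⟫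
      = Complex.exp (li * (τ : ℂ)) * ⟪wi, y⟫ := by
    intro y
    rw [← ContinuousLinearMap.adjoint_inner_left, hexpadj, hexpwi, inner_smul_left,
      ← Complex.exp_conj]
    congr 2
    simp [mul_comm]
  have h5 : ∀ y : H, ⟪wi, (A - (q : ℂ) • (1 : H →L[ℂ] H)) y⟫
      = (li - (q : ℂ)) * ⟪wi, y⟫ := by
    intro y
    rw [ContinuousLinearMap.sub_apply, ContinuousLinearMap.smul_apply,
      ContinuousLinearMap.one_apply, inner_sub_right, inner_smul_right,
      ← ContinuousLinearMap.adjoint_inner_left, hwi, inner_smul_left, Complex.conj_conj]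
    ring
  rw [h1, h2, h3, map_smul, map_smul, map_smul, inner_smul_right, h4, h5] at h
  have hmain : (li + (starRingEnd ℂ) lj) * ⟪wi, V wj⟫
      = -(((starRingEnd ℂ) lj - (q : ℂ)) * (Complex.exp (li * (τ : ℂ))
          * ((li - (q : ℂ)) * ⟪wi, N wj⟫))) := by
    rw [add_mul]; exact h
  field_simp
  rw [mul_comm _ (li + (starRingEnd ℂ) lj), hmain]
  ring

/-- (Theorem 3.3(a).)  If `V` satisfies the weak Lyapunov equation for
`(A, N, q, τ)`, `A† wᵢ = conj(λᵢ)·wᵢ`, `A† wⱼ = conj(λⱼ)·wⱼ` and `λᵢ + conj(λⱼ) ≠ 0`, then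
`⟨wᵢ, V wⱼ⟩ = −((λᵢ−q)(conj(λⱼ)−q)/(λᵢ+conj(λⱼ))) e^{λᵢτ} ⟨wᵢ, N wⱼ⟩`; moreover if `V₀`
satisfies the weak Lyapunov equation for `(A, N, q, 0)` then
`⟨wᵢ, V wⱼ⟩ = e^{λᵢτ} ⟨wᵢ, V₀ wⱼ⟩`. -/
theorem eigenfunction_autocovariance_formula
    {H : Type*} [NormedAddCommGroup H] [InnerProductSpace ℂ H] [CompleteSpace H]
    (A N V : H →L[ℂ] H) (q : ℝ) (τ : ℝ) (hτ : 0 ≤ τ)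
    (hV : WeakLyapunov A N V q τ)
    (wi wj : H) (li lj : ℂ)
    (hwi : (ContinuousLinearMap.adjoint A) wi = (starRingEnd ℂ) li • wi)
    (hwj : (ContinuousLinearMap.adjoint A) wj = (starRingEnd ℂ) lj • wj)
    (hsum : li + (starRingEnd ℂ) lj ≠ 0) :
    ⟪wi, V wj⟫
        = -((li - (q : ℂ)) * ((starRingEnd ℂ) lj - (q : ℂ)) / (li + (starRingEnd ℂ) lj))
            * Complex.exp (li * (τ : ℂ)) * ⟪wi, N wj⟫
    ∧ ∀ V₀ : H →L[ℂ] H, WeakLyapunov A N V₀ q 0 →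
        ⟪wi, V wj⟫ = Complex.exp (li * (τ : ℂ)) * ⟪wi, V₀ wj⟫ := by
  have hVmain := key_formula A N V q τ hV wi wj li lj hwi hwj hsum
  refine ⟨hVmain, fun V₀ hV₀ => ?_⟩
  have h0 := key_formula A N V₀ q 0 hV₀ wi wj li lj hwi hwj hsum
  rw [hVmain, h0]
  simp only [Complex.ofReal_zero, mul_zero, Complex.exp_zero]
  ring
end

section
/- (Theorem 3.3(b), divergence of the early-warning sign.) Let τ ≥ 0, p* ∈ ℝ and C⁻ > 0. For each p < p*, let A(p), N(p), V(p) be bounded linear operators on a complex Hilbert space H and q(p) ∈ ℝ such that V(p) satisfies the weak Lyapunov equation for (A(p), N(p), q(p), τ); let w(p) ∈ H and λ(p) ∈ ℂ with A(p)† w(p) = conj(λ(p))·w(p) and Re λ(p) < 0. Assume that Re λ(p) → 0 as p → p*⁻, and that |λ(p) − q(p)| ≥ C⁻ and |⟨w(p), N(p) w(p)⟩| ≥ C⁻ for all p < p*. Then |⟨w(p), V(p) w(p)⟩| → ∞ as p → p*⁻. -/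
open Filter

local notation "⟪" x ", " y "⟫" => @inner ℂ _ _ x y

lemma exp_apply_eig {H : Type*} [NormedAddCommGroup H] [InnerProductSpace ℂ H] [CompleteSpace H]
    (B : H →L[ℂ] H) (c : ℂ) (w : H) (h : B w = c • w) :
    NormedSpace.exp B w = Complex.exp c • w := by
  have hpow : ∀ n : ℕ, (B ^ n) w = c ^ n • w := by
    intro n
    induction n with
    | zero => simp
    | succ n ih =>
      rw [pow_succ, pow_succ, ContinuousLinearMap.mul_apply, h, map_smul, ih, smul_smul]
      ring_nf
  have hsum : Summable fun n : ℕ => ((n.factorial : ℂ))⁻¹ • B ^ n :=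
    NormedSpace.expSeries_summable' B
  have hsum2 : Summable fun n : ℕ => ((n.factorial : ℂ))⁻¹ * c ^ n :=
    NormedSpace.expSeries_summable' (𝕂 := ℂ) c
  have := (ContinuousLinearMap.apply ℂ H w).map_tsum hsum
  rw [NormedSpace.exp_eq_tsum (𝕂 := ℂ)]
  calc (∑' n : ℕ, ((n.factorial : ℂ))⁻¹ • B ^ n) w
      = ∑' n : ℕ, (((n.factorial : ℂ))⁻¹ • B ^ n) w := this
    _ = ∑' n : ℕ, (((n.factorial : ℂ))⁻¹ * c ^ n) • w := by
        congr 1; ext n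
        simp [hpow n, smul_smul]
    _ = (∑' n : ℕ, ((n.factorial : ℂ))⁻¹ * c ^ n) • w := hsum2.tsum_smul_const w
    _ = Complex.exp c • w := by
        rw [Complex.exp_eq_exp_ℂ, NormedSpace.exp_eq_tsum (𝕂 := ℂ)]
        simp [smul_eq_mul]

/-- (Theorem 3.3(b), divergence of the early-warning sign.)  Along a family
`p ↦ (A(p), N(p), V(p), q(p))` of weak Lyapunov solutions with adjoint eigenvectors
`A(p)† w(p) = conj(λ(p)) w(p)`, `Re λ(p) < 0`, `Re λ(p) → 0` as `p → p*⁻`, and uniform lower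
bounds `|λ(p) − q(p)| ≥ C⁻`, `|⟨w(p), N(p) w(p)⟩| ≥ C⁻`, the quantity
`|⟨w(p), V(p) w(p)⟩|` diverges to `∞` as `p → p*⁻`. -/
theorem autocovariance_divergence
    {H : Type*} [NormedAddCommGroup H] [InnerProductSpace ℂ H] [CompleteSpace H]
    (τ : ℝ) (hτ : 0 ≤ τ) (pstar : ℝ) (Cm : ℝ) (hCm : 0 < Cm)
    (A N V : ℝ → (H →L[ℂ] H)) (q : ℝ → ℝ) (w : ℝ → H) (lam : ℝ → ℂ)
    (hLyap : ∀ p < pstar, WeakLyapunov (A p) (N p) (V p) (q p) τ)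
    (heig : ∀ p < pstar,
      (ContinuousLinearMap.adjoint (A p)) (w p) = (starRingEnd ℂ) (lam p) • w p)
    (hre : ∀ p < pstar, (lam p).re < 0)
    (hre0 : Tendsto (fun p => (lam p).re) (nhdsWithin pstar (Set.Iio pstar)) (nhds 0))
    (hq : ∀ p < pstar, Cm ≤ ‖lam p - (q p : ℂ)‖)
    (hN : ∀ p < pstar, Cm ≤ ‖⟪w p, (N p) (w p)⟫‖) :
    Tendsto (fun p => ‖⟪w p, (V p) (w p)⟫‖) (nhdsWithin pstar (Set.Iio pstar)) atTop := by
  -- pointwise identity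
  have key : ∀ p < pstar, 2 * |(lam p).re| * ‖⟪w p, (V p) (w p)⟫‖
      = Real.exp (τ * (lam p).re) * (‖lam p - (q p : ℂ)‖ * ‖lam p - (q p : ℂ)‖)
        * ‖⟪w p, (N p) (w p)⟫‖ := by
    intro p hp
    set l := lam p with hl
    set W := w p with hW
    have heq := hLyap p hp W W
    have harg : ((ContinuousLinearMap.adjoint (A p)) - ((q p) : ℂ) • (1 : H →L[ℂ] H)) W
        = ((starRingEnd ℂ) l - (q p : ℂ)) • W := by
      rw [ContinuousLinearMap.sub_apply, heig p hp, ContinuousLinearMap.smul_apply,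
        ContinuousLinearMap.one_apply, sub_smul]
    have h1 : ⟪W, (A p) ((V p) W)⟫ = l * ⟪W, (V p) W⟫ := by
      rw [← ContinuousLinearMap.adjoint_inner_left, heig p hp, inner_smul_left]
      simp
      rfl
    have h2 : ⟪W, (V p) ((ContinuousLinearMap.adjoint (A p)) W)⟫
        = (starRingEnd ℂ) l * ⟪W, (V p) W⟫ := by
      rw [heig p hp, map_smul, inner_smul_right]
    have hEadj : ContinuousLinearMap.adjoint (NormedSpace.exp ((τ : ℂ) • (A p)))
        = NormedSpace.exp ((τ : ℂ) • (ContinuousLinearMap.adjoint (A p))) := by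
      rw [← ContinuousLinearMap.star_eq_adjoint, NormedSpace.star_exp, star_smul,
        ← ContinuousLinearMap.star_eq_adjoint]
      norm_num
    have hE : ∀ X : H, ⟪W, (NormedSpace.exp ((τ : ℂ) • (A p))) X⟫
        = Complex.exp ((τ : ℂ) * l) * ⟪W, X⟫ := by
      intro X
      rw [← ContinuousLinearMap.adjoint_inner_left, hEadj,
        exp_apply_eig _ ((τ : ℂ) * (starRingEnd ℂ) l) W
          (by rw [ContinuousLinearMap.smul_apply, heig p hp, smul_smul]),
        inner_smul_left, ← Complex.exp_conj]
      simp
    have hM : ∀ Z : H, ⟪W, ((A p) - ((q p) : ℂ) • (1 : H →L[ℂ] H)) Z⟫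
        = (l - (q p : ℂ)) * ⟪W, Z⟫ := by
      intro Z
      rw [← ContinuousLinearMap.adjoint_inner_left]
      have : ContinuousLinearMap.adjoint ((A p) - ((q p) : ℂ) • (1 : H →L[ℂ] H))
          = (ContinuousLinearMap.adjoint (A p)) - ((q p) : ℂ) • (1 : H →L[ℂ] H) := by
        rw [← ContinuousLinearMap.star_eq_adjoint, star_sub, star_smul, star_one,
          ← ContinuousLinearMap.star_eq_adjoint]
        norm_num
      rw [this, ContinuousLinearMap.sub_apply, heig p hp, ContinuousLinearMap.smul_apply,
        ContinuousLinearMap.one_apply, ← sub_smul, inner_smul_left]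
      simp
      rfl
    rw [h1, h2, harg, map_smul, map_smul, map_smul, inner_smul_right, hE, hM] at heq
    have heq2 : ((2 * l.re : ℝ) : ℂ) * ⟪W, (V p) W⟫
        = -(((starRingEnd ℂ) l - (q p : ℂ)) * (Complex.exp ((τ : ℂ) * l)
            * ((l - (q p : ℂ)) * ⟪W, (N p) W⟫))) := by
      rw [← heq, ← add_mul, Complex.add_conj]
    have := congrArg norm heq2
    rw [norm_mul, norm_neg, norm_mul, norm_mul, norm_mul] at this
    have hconj : ‖(starRingEnd ℂ) l - ((q p : ℝ) : ℂ)‖ = ‖l - (q p : ℂ)‖ := by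
      rw [show (starRingEnd ℂ) l - ((q p : ℝ) : ℂ) = (starRingEnd ℂ) (l - (q p : ℂ)) by
        rw [map_sub, Complex.conj_ofReal]]
      exact RCLike.norm_conj _
    have hexp : ‖Complex.exp ((τ : ℂ) * l)‖ = Real.exp (τ * l.re) := by
      rw [Complex.norm_exp]
      congr 1
      simp [Complex.mul_re]
    have h2re : ‖((2 * l.re : ℝ) : ℂ)‖ = 2 * |l.re| := by
      rw [Complex.norm_real, Real.norm_eq_abs, abs_mul]
      norm_num
    rw [hconj, hexp, h2re] at this
    rw [this]; ring
  have hK : 0 < Real.exp (-τ) * Cm ^ 3 / 2 := by positivity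
  have h1 : Tendsto (fun p => -(lam p).re) (nhdsWithin pstar (Set.Iio pstar))
      (nhdsWithin 0 (Set.Ioi 0)) := by
    apply tendsto_nhdsWithin_of_tendsto_nhds_of_eventually_within
    · simpa using hre0.neg
    · filter_upwards [self_mem_nhdsWithin] with p hp
      exact neg_pos.2 (hre p hp)
  have h2 : Tendsto (fun p => (Real.exp (-τ) * Cm ^ 3 / 2) * (-(lam p).re)⁻¹)
      (nhdsWithin pstar (Set.Iio pstar)) atTop :=
    (h1.inv_tendsto_nhdsGT_zero).const_mul_atTop hK
  apply tendsto_atTop_mono' _ _ h2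
  have hball : ∀ᶠ p in nhdsWithin pstar (Set.Iio pstar), -1 < (lam p).re :=
    hre0.eventually (eventually_gt_nhds (by norm_num))
  filter_upwards [self_mem_nhdsWithin, hball] with p hp hball
  have hneg := hre p hp
  have hpos : 0 < -(lam p).re := neg_pos.2 hneg
  have hkey := key p hp
  rw [abs_of_neg hneg] at hkey
  have hexp : Real.exp (-τ) ≤ Real.exp (τ * (lam p).re) := by
    apply Real.exp_le_exp.2
    nlinarith
  have hnum : Real.exp (-τ) * Cm ^ 3
      ≤ Real.exp (τ * (lam p).re) * (‖lam p - (q p : ℂ)‖ * ‖lam p - (q p : ℂ)‖)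
        * ‖⟪w p, (N p) (w p)⟫‖ := by
    have : Real.exp (-τ) * Cm ^ 3 = Real.exp (-τ) * (Cm * Cm) * Cm := by ring
    rw [this]
    have ha : Cm * Cm ≤ ‖lam p - (q p : ℂ)‖ * ‖lam p - (q p : ℂ)‖ :=
      mul_le_mul (hq p hp) (hq p hp) hCm.le (le_trans hCm.le (hq p hp))
    have hb := hN p hp
    have hc : Real.exp (-τ) * (Cm * Cm)
        ≤ Real.exp (τ * (lam p).re) * (‖lam p - (q p : ℂ)‖ * ‖lam p - (q p : ℂ)‖) :=
      mul_le_mul hexp ha (by positivity) (Real.exp_pos _).le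
    exact mul_le_mul hc hb hCm.le (by positivity)
  have hrw : Real.exp (-τ) * Cm ^ 3 / 2 * (-(lam p).re)⁻¹
      = (Real.exp (-τ) * Cm ^ 3) / (2 * (-(lam p).re)) := by
    field_simp
  rw [hrw, div_le_iff₀ (by positivity)]
  nlinarith [hkey, hnum]
end

section
/- (Theorem 3.3(c), recursion for generalized eigenfunctions.) Let A and N be bounded linear operators on a complex Hilbert space H, q ∈ ℝ, τ ≥ 0, and let V be a bounded operator satisfying the weak Lyapunov equation for (A, N, q, τ). Let λ_i, λ_j ∈ ℂ with λ_i + conj(λ_j) ≠ 0, and let w_0 = 0, w_1, …, w_{K₁} ∈ H and u_0 = 0, u_1, …, u_{K₂} ∈ H be adjoint Jordan chains: A† w_k = conj(λ_i)·w_k + w_{k−1} for k = 1, …, K₁ and A† u_k = conj(λ_j)·u_k + u_{k−1} for k = 1, …, K₂. Then for all k₁ ∈ {1, …, K₁} and k₂ ∈ {1, …, K₂}: ⟨w_{k₁}, V u_{k₂}⟩ = −( ⟨w_{k₁}, V u_{k₂−1}⟩ + ⟨w_{k₁−1}, V u_{k₂}⟩ + e^{λ_i τ} · Σ_{k=1}^{k₁}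 (τ^{k₁−k}/(k₁−k)!) · ⟨(conj(λ_i) − q)·w_k + w_{k−1}, N((conj(λ_j) − q)·u_{k₂} + u_{k₂−1})⟩ ) / (λ_i + conj(λ_j)). -/
local notation "⟪" x ", " y "⟫" => @inner ℂ _ _ x y

lemma exp_apply_vec {H : Type*} [NormedAddCommGroup H] [InnerProductSpace ℂ H] [CompleteSpace H]
    (T : H →L[ℂ] H) (x : H) :
    (NormedSpace.exp T) x = ∑' n : ℕ, ((n.factorial : ℂ)⁻¹) • (T ^ n) x := by
  rw [NormedSpace.exp_eq_tsum (𝕂 := ℂ)]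
  have h := (NormedSpace.expSeries_summable' (𝕂 := ℂ) T).hasSum
  have := (h.mapL (ContinuousLinearMap.apply ℂ H x)).tsum_eq
  simpa using this.symm

lemma jordan_pow {H : Type*} [NormedAddCommGroup H] [InnerProductSpace ℂ H]
    (B : H →L[ℂ] H) (μ : ℂ) (K : ℕ) (w : ℕ → H) (hw0 : w 0 = 0)
    (hw : ∀ k, 1 ≤ k → k ≤ K → B (w k) = μ • w k + w (k - 1)) :
    ∀ m k, k ≤ K → ((B - μ • (1 : H →L[ℂ] H)) ^ m) (w k) = w (k - m) := by
  have base : ∀ k, k ≤ K → (B - μ • (1 : H →L[ℂ] H)) (w k) = w (k - 1) := by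
    intro k hk
    rcases Nat.eq_zero_or_pos k with h0 | h1
    · subst h0; simp [hw0]
    · simp [ContinuousLinearMap.sub_apply, hw k h1 hk]
  intro m
  induction m with
  | zero => intro k hk; simp
  | succ m ih =>
    intro k hk
    rw [pow_succ]
    have : ((B - μ • (1 : H →L[ℂ] H)) ^ m) ((B - μ • (1 : H →L[ℂ] H)) (w k)) = w (k - 1 - m) := by
      rw [base k hk]; exact ih (k - 1) (le_trans (Nat.sub_le _ _) hk)
    simpa [ContinuousLinearMap.mul_apply, Nat.sub_sub, Nat.add_comm] using this

lemma exp_chain {H : Type*} [NormedAddCommGroup H] [InnerProductSpace ℂ H] [CompleteSpace H]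
    (B : H →L[ℂ] H) (μ : ℂ) (K : ℕ) (w : ℕ → H) (hw0 : w 0 = 0)
    (hw : ∀ k, 1 ≤ k → k ≤ K → B (w k) = μ • w k + w (k - 1))
    (τ : ℂ) (k₁ : ℕ) (hk₁ : k₁ ≤ K) :
    (NormedSpace.exp (τ • B)) (w k₁)
      = Complex.exp (τ * μ) •
          ∑ k ∈ Finset.Icc 1 k₁,
            ((τ ^ (k₁ - k)) * (((k₁ - k).factorial : ℂ))⁻¹) • w k := by
  have hdecomp : τ • B = (τ * μ) • (1 : H →L[ℂ] H) + τ • (B - μ • (1 : H →L[ℂ] H)) := by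
    rw [smul_sub, smul_smul]; abel
  have hcomm : Commute ((τ * μ) • (1 : H →L[ℂ] H)) (τ • (B - μ • (1 : H →L[ℂ] H))) :=
    (Commute.one_left _).smul_left _ |>.smul_right _
  rw [hdecomp, NormedSpace.exp_add_of_commute_of_mem_ball (𝕂 := ℂ) hcomm ((NormedSpace.expSeries_radius_eq_top ℂ (H →L[ℂ] H)).symm ▸ edist_lt_top _ _) ((NormedSpace.expSeries_radius_eq_top ℂ (H →L[ℂ] H)).symm ▸ edist_lt_top _ _)]
  have hexp1 : NormedSpace.exp ((τ * μ) • (1 : H →L[ℂ] H))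
      = Complex.exp (τ * μ) • (1 : H →L[ℂ] H) := by
    have : ((τ * μ) • (1 : H →L[ℂ] H)) = algebraMap ℂ (H →L[ℂ] H) (τ * μ) := by
      simp [Algebra.algebraMap_eq_smul_one]
    rw [this, ← NormedSpace.algebraMap_exp_comm, Complex.exp_eq_exp_ℂ,
      Algebra.algebraMap_eq_smul_one]
  rw [ContinuousLinearMap.mul_apply, hexp1]
  simp only [ContinuousLinearMap.smul_apply, ContinuousLinearMap.one_apply]
  congr 1
  rw [exp_apply_vec]
  have hterm : ∀ n : ℕ, ((n.factorial : ℂ)⁻¹) • ((τ • (B - μ • (1 : H →L[ℂ] H))) ^ n) (w k₁)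
      = (τ ^ n * (n.factorial : ℂ)⁻¹) • w (k₁ - n) := by
    intro n
    rw [smul_pow, ContinuousLinearMap.smul_apply, jordan_pow B μ K w hw0 hw n k₁ hk₁,
      smul_smul, mul_comm]
  have hzero : ∀ n ∉ Finset.range k₁,
      ((n.factorial : ℂ)⁻¹) • ((τ • (B - μ • (1 : H →L[ℂ] H))) ^ n) (w k₁) = 0 := by
    intro n hn
    rw [hterm n, Nat.sub_eq_zero_of_le (by simpa using hn), hw0, smul_zero]
  rw [tsum_eq_sum hzero]
  refine Finset.sum_bij' (fun n _ => k₁ - n) (fun k _ => k₁ - k) ?_ ?_ ?_ ?_ ?_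
  · intro n hn
    simp only [Finset.mem_range] at hn
    simp only [Finset.mem_Icc]
    omega
  · intro k hk
    simp only [Finset.mem_Icc] at hk
    simp only [Finset.mem_range]
    omega
  · intro n hn; simp only [Finset.mem_range] at hn; omega
  · intro k hk; simp only [Finset.mem_Icc] at hk; omega
  · intro n hn
    simp only [Finset.mem_range] at hn
    rw [hterm n]
    have : k₁ - (k₁ - n) = n := by omega
    rw [this]

/-- (Theorem 3.3(c), recursion for generalized eigenfunctions.)  For adjoint
Jordan chains `w₀ = 0, w₁, …, w_{K₁}` for `conj(λᵢ)` and `u₀ = 0, u₁, …, u_{K₂}` for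
`conj(λⱼ)` with `λᵢ + conj(λⱼ) ≠ 0`, a weak Lyapunov solution `V` satisfies, for all
`k₁ ∈ {1,…,K₁}` and `k₂ ∈ {1,…,K₂}`:
`⟨w_{k₁}, V u_{k₂}⟩ = −(⟨w_{k₁}, V u_{k₂−1}⟩ + ⟨w_{k₁−1}, V u_{k₂}⟩ +
  e^{λᵢτ} Σ_{k=1}^{k₁} (τ^{k₁−k}/(k₁−k)!)
    ⟨(conj(λᵢ)−q)w_k + w_{k−1}, N((conj(λⱼ)−q)u_{k₂} + u_{k₂−1})⟩) / (λᵢ + conj(λⱼ))`. -/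
theorem generalized_eigenfunction_recursion
    {H : Type*} [NormedAddCommGroup H] [InnerProductSpace ℂ H] [CompleteSpace H]
    (A N V : H →L[ℂ] H) (q : ℝ) (τ : ℝ) (hτ : 0 ≤ τ)
    (hV : WeakLyapunov A N V q τ)
    (li lj : ℂ) (hsum : li + (starRingEnd ℂ) lj ≠ 0)
    (K₁ K₂ : ℕ) (hK₁ : 1 ≤ K₁) (hK₂ : 1 ≤ K₂)
    (w u : ℕ → H) (hw0 : w 0 = 0) (hu0 : u 0 = 0)
    (hw : ∀ k, 1 ≤ k → k ≤ K₁ →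
      (ContinuousLinearMap.adjoint A) (w k) = (starRingEnd ℂ) li • w k + w (k - 1))
    (hu : ∀ k, 1 ≤ k → k ≤ K₂ →
      (ContinuousLinearMap.adjoint A) (u k) = (starRingEnd ℂ) lj • u k + u (k - 1)) :
    ∀ k₁ k₂ : ℕ, 1 ≤ k₁ → k₁ ≤ K₁ → 1 ≤ k₂ → k₂ ≤ K₂ →
      ⟪w k₁, V (u k₂)⟫
        = -(⟪w k₁, V (u (k₂ - 1))⟫ + ⟪w (k₁ - 1), V (u k₂)⟫
            + Complex.exp (li * (τ : ℂ)) *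
                ∑ k ∈ Finset.Icc 1 k₁,
                  (((τ : ℂ) ^ (k₁ - k)) / ((Nat.factorial (k₁ - k) : ℂ))) *
                    ⟪((starRingEnd ℂ) li - (q : ℂ)) • w k + w (k - 1),
                      N (((starRingEnd ℂ) lj - (q : ℂ)) • u k₂ + u (k₂ - 1))⟫)
          / (li + (starRingEnd ℂ) lj) := by
  intro k₁ k₂ hk₁1 hk₁K hk₂1 hk₂K
  set B := ContinuousLinearMap.adjoint A with hB
  set μ := (starRingEnd ℂ) li with hμ
  set ν := (starRingEnd ℂ) lj with hν
  have key := hV (w k₁) (u k₂)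
  -- left terms
  have hL1 : ⟪w k₁, A (V (u k₂))⟫ = li * ⟪w k₁, V (u k₂)⟫ + ⟪w (k₁ - 1), V (u k₂)⟫ := by
    rw [← ContinuousLinearMap.adjoint_inner_left, ← hB, hw k₁ hk₁1 hk₁K, inner_add_left,
      inner_smul_left, hμ, Complex.conj_conj]
  have hL2 : ⟪w k₁, V (B (u k₂))⟫ = ν * ⟪w k₁, V (u k₂)⟫ + ⟪w k₁, V (u (k₂ - 1))⟫ := by
    rw [hu k₂ hk₂1 hk₂K, map_add, map_smul, inner_add_right, inner_smul_right]
  -- adjoint identities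
  have hadjexp : ContinuousLinearMap.adjoint (NormedSpace.exp ((τ : ℂ) • A))
      = NormedSpace.exp ((τ : ℂ) • B) := by
    rw [← ContinuousLinearMap.star_eq_adjoint, NormedSpace.star_exp]
    congr 1
    rw [star_smul, ContinuousLinearMap.star_eq_adjoint, ← hB]
    congr 1
    simp [Complex.conj_ofReal]
  have hadj2 : ContinuousLinearMap.adjoint (A - (q : ℂ) • (1 : H →L[ℂ] H))
      = B - (q : ℂ) • (1 : H →L[ℂ] H) := by
    rw [← ContinuousLinearMap.star_eq_adjoint, star_sub, star_smul,
      ContinuousLinearMap.star_eq_adjoint, ← hB]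
    simp [Complex.conj_ofReal, ← ContinuousLinearMap.star_eq_adjoint]
  have hBq : ∀ k, 1 ≤ k → k ≤ K₁ →
      (B - (q : ℂ) • (1 : H →L[ℂ] H)) (w k) = (μ - q) • w k + w (k - 1) := by
    intro k h1 h2
    simp only [ContinuousLinearMap.sub_apply, ContinuousLinearMap.smul_apply,
      ContinuousLinearMap.one_apply, hw k h1 h2, ← hμ, sub_smul]
    abel
  have hy : (B - (q : ℂ) • (1 : H →L[ℂ] H)) (u k₂) = (ν - q) • u k₂ + u (k₂ - 1) := by
    simp only [ContinuousLinearMap.sub_apply, ContinuousLinearMap.smul_apply,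
      ContinuousLinearMap.one_apply, hu k₂ hk₂1 hk₂K, ← hν, sub_smul]
    abel
  -- right term
  have hR : ⟪w k₁, (NormedSpace.exp ((τ : ℂ) • A))
        ((A - (q : ℂ) • (1 : H →L[ℂ] H)) (N ((B - (q : ℂ) • (1 : H →L[ℂ] H)) (u k₂))))⟫
      = Complex.exp (li * (τ : ℂ)) *
          ∑ k ∈ Finset.Icc 1 k₁,
            (((τ : ℂ) ^ (k₁ - k)) / ((Nat.factorial (k₁ - k) : ℂ))) *
              ⟪(μ - q) • w k + w (k - 1), N ((ν - q) • u k₂ + u (k₂ - 1))⟫ := by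
    rw [hy, ← ContinuousLinearMap.adjoint_inner_left, hadjexp,
      ← ContinuousLinearMap.adjoint_inner_left, hadj2,
      exp_chain B μ K₁ w hw0 hw (τ : ℂ) k₁ hk₁K, map_smul, map_sum, inner_smul_left]
    have hconjexp : (starRingEnd ℂ) (Complex.exp ((τ : ℂ) * μ)) = Complex.exp (li * (τ : ℂ)) := by
      rw [← Complex.exp_conj, map_mul, hμ, Complex.conj_conj, Complex.conj_ofReal, mul_comm]
    rw [hconjexp]
    congr 1
    rw [sum_inner]
    refine Finset.sum_congr rfl ?_
    intro k hk
    simp only [Finset.mem_Icc] at hk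
    rw [map_smul, inner_smul_left, hBq k hk.1 (le_trans hk.2 hk₁K)]
    congr 1
    rw [map_mul, map_pow, map_inv₀, Complex.conj_ofReal, map_natCast, div_eq_mul_inv]
  rw [hL1, hL2, hR] at key
  rw [eq_div_iff hsum]
  linear_combination key
end

section
/- (Theorem 3.3(d), scaling law along generalized eigenfunctions.) Let τ ≥ 0, p* ∈ ℝ, integers K₁, K₂ ≥ 1, indices k₁ ∈ {1, …, K₁}, k₂ ∈ {1, …, K₂}, and constants C⁻, C⁺ > 0. For each p < p*, let A(p), N(p), V(p) be bounded operators on a complex Hilbert space H and q(p) ∈ ℝ such that V(p) satisfies the weak Lyapunov equation for (A(p), N(p), q(p), τ); let λ_i(p), λ_j(p) ∈ ℂ and adjoint Jordan chains w_0(p) = 0, A(p)† w_k(p) = conj(λ_i(p))·w_k(p) + w_{k−1}(p) for k ≤ K₁, and u_0(p) = 0, A(p)† u_k(p) = conj(λ_j(p))·u_k(p) + u_{k−1}(p) for k ≤ K₂. Assume for all p < p*: |λ_i(p) − q(p)| ≥ C⁻, |λ_j(p) − q(p)| ≥ C⁻, |⟨w_1(p), N(p) u_1(p)⟩| ≥ C⁻;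 ‖N(p)‖ ≤ C⁺, ‖w_k(p)‖ ≤ C⁺ and ‖u_k(p)‖ ≤ C⁺ for all k, |λ_i(p)| ≤ C⁺, |λ_j(p)| ≤ C⁺, |q(p)| ≤ C⁺, Re λ_i(p) ≤ 0; and s(p) := λ_i(p) + conj(λ_j(p)) ≠ 0 with s(p) → 0 as p → p*⁻. Then there exist δ > 0 and constants 0 < c ≤ C such that for all p ∈ (p* − δ, p*): c·|s(p)|^{−(k₁+k₂−1)} ≤ |⟨w_{k₁}(p), V(p) u_{k₂}(p)⟩| ≤ C·|s(p)|^{−(k₁+k₂−1)}. -/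
open Filter

local notation "⟪" x ", " y "⟫" => @inner ℂ _ _ x y

section Helpers

variable {H : Type*} [NormedAddCommGroup H] [InnerProductSpace ℂ H] [CompleteSpace H]

lemma chain_pow (B : H →L[ℂ] H) (μ : ℂ) (K : ℕ) (x : ℕ → H) (hx0 : x 0 = 0)
    (hx : ∀ k, 1 ≤ k → k ≤ K → B (x k) = μ • x k + x (k-1)) :
    ∀ n k, k ≤ K → ((B - μ • (1 : H →L[ℂ] H))^n) (x k) = x (k - n) := by
  have h1 : ∀ m ≤ K, (B - μ • (1 : H →L[ℂ] H)) (x m) = x (m - 1) := by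
    intro m hm
    rcases Nat.eq_zero_or_pos m with rfl | hm1
    · simp [hx0]
    · have := hx m hm1 hm
      simp [ContinuousLinearMap.sub_apply, this]
  intro n
  induction n with
  | zero => intro k hk; simp
  | succ n ih =>
    intro k hk
    rw [pow_succ, ContinuousLinearMap.mul_apply, h1 k hk, ih (k-1) (le_trans (Nat.sub_le _ _) hk)]
    congr 1
    omega

lemma exp_chain_s8 (τ : ℝ) (B : H →L[ℂ] H) (μ : ℂ) (K : ℕ) (x : ℕ → H) (hx0 : x 0 = 0)
    (hx : ∀ k, 1 ≤ k → k ≤ K → B (x k) = μ • x k + x (k-1)) (k : ℕ) (hk : k ≤ K) :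
    (NormedSpace.exp ((τ : ℂ) • B)) (x k)
      = ∑ m ∈ Finset.range k,
          (Complex.exp (τ * μ) * (τ:ℂ)^m * ((m.factorial : ℂ))⁻¹) • x (k - m) := by
  set C : H →L[ℂ] H := B - μ • 1 with hC
  have hsplit : (τ : ℂ) • B = ((τ : ℂ) * μ) • (1 : H →L[ℂ] H) + (τ : ℂ) • C := by
    rw [hC, smul_sub, smul_smul]; abel
  have hcomm : Commute (((τ : ℂ) * μ) • (1 : H →L[ℂ] H)) ((τ : ℂ) • C) :=
    (Commute.one_left _).smul_left _ |>.smul_right _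
  rw [hsplit, NormedSpace.exp_add_of_commute_of_mem_ball (𝕂 := ℂ) hcomm
    ((NormedSpace.expSeries_radius_eq_top ℂ (H →L[ℂ] H)).symm ▸ edist_lt_top _ _)
    ((NormedSpace.expSeries_radius_eq_top ℂ (H →L[ℂ] H)).symm ▸ edist_lt_top _ _)]
  have h1 : NormedSpace.exp (((τ : ℂ) * μ) • (1 : H →L[ℂ] H))
      = Complex.exp (τ * μ) • (1 : H →L[ℂ] H) := by
    rw [← Algebra.algebraMap_eq_smul_one, ← NormedSpace.algebraMap_exp_comm,
      Complex.exp_eq_exp_ℂ, Algebra.algebraMap_eq_smul_one]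
  have h2 : (NormedSpace.exp ((τ : ℂ) • C)) (x k)
      = ∑ m ∈ Finset.range k, ((τ:ℂ)^m * ((m.factorial : ℂ))⁻¹) • x (k - m) := by
    have hexp : NormedSpace.exp ((τ : ℂ) • C)
        = ∑' n : ℕ, ((n.factorial : ℂ))⁻¹ • ((τ : ℂ) • C)^n := by
      rw [NormedSpace.exp_eq_tsum ℂ]
    have hsum : Summable fun n : ℕ => ((n.factorial : ℂ))⁻¹ • ((τ : ℂ) • C)^n :=
      NormedSpace.expSeries_summable' _
    have happ : (NormedSpace.exp ((τ : ℂ) • C)) (x k)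
        = ∑' n : ℕ, (((n.factorial : ℂ))⁻¹ • ((τ : ℂ) • C)^n) (x k) := by
      rw [hexp]
      exact (ContinuousLinearMap.apply ℂ H (x k)).map_tsum hsum
    rw [happ]
    have hterm : ∀ n : ℕ, (((n.factorial : ℂ))⁻¹ • ((τ : ℂ) • C)^n) (x k)
        = ((τ:ℂ)^n * ((n.factorial : ℂ))⁻¹) • x (k - n) := by
      intro n
      rw [smul_pow, ContinuousLinearMap.smul_apply, ContinuousLinearMap.smul_apply,
        chain_pow B μ K x hx0 hx n k hk, smul_smul, mul_comm]
    simp_rw [hterm]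
    refine tsum_eq_sum ?_
    intro n hn
    have : k - n = 0 := by simp at hn; omega
    rw [this, hx0, smul_zero]
  rw [ContinuousLinearMap.mul_apply, h2, map_sum, h1]
  refine Finset.sum_congr rfl fun m _ => ?_
  rw [ContinuousLinearMap.smul_apply, ContinuousLinearMap.one_apply, smul_smul]
  ring_nf

noncomputable def Dconst (τ : ℝ) (K₁ : ℕ) (Cp : ℝ) : ℝ :=
  ((K₁:ℝ) * (Real.exp τ * (2*Cp^2 + Cp))) * (Cp * (2*Cp^2 + Cp))

noncomputable def rconst (τ Cm Cp : ℝ) : ℝ := Real.exp (-(τ*Cp)) * (Cm*Cm*Cm)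

noncomputable def Mconst (τ : ℝ) (K₁ n : ℕ) (Cp : ℝ) : ℝ := Dconst τ K₁ Cp * 3^n

def bcoef (k l : ℕ) : ℤ :=
  if k = 0 ∨ l = 0 then 0 else (-1)^(k+l) * ((k+l-2).choose (k-1))

lemma bcoef_succ (a c : ℕ) : bcoef (a+1) (c+1) = (-1)^(a+c) * ((a+c).choose a) := by
  simp only [bcoef, if_neg (by omega : ¬(a+1 = 0 ∨ c+1 = 0))]
  rw [show a+1+(c+1)-2 = a+c by omega, show a+1-1 = a by omega,
    show a+1+(c+1) = (a+c)+2 by omega, pow_add]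
  norm_num

lemma bcoef_rec (k l : ℕ) (hk : 1 ≤ k) (hl : 1 ≤ l) (h3 : 3 ≤ k + l) :
    bcoef k l = -(bcoef (k-1) l + bcoef k (l-1)) := by
  obtain ⟨a, rfl⟩ : ∃ a, k = a + 1 := ⟨k - 1, by omega⟩
  obtain ⟨c, rfl⟩ : ∃ c, l = c + 1 := ⟨l - 1, by omega⟩
  simp only [Nat.add_sub_cancel]
  rcases Nat.eq_zero_or_pos a with rfl | ha
  · obtain ⟨c', rfl⟩ : ∃ c', c = c' + 1 := ⟨c - 1, by omega⟩
    rw [bcoef_succ, bcoef_succ, show bcoef 0 (c'+1+1) = 0 by simp [bcoef]]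
    simp [pow_succ]
    try ring
  · rcases Nat.eq_zero_or_pos c with rfl | hc
    · obtain ⟨a', rfl⟩ : ∃ a', a = a' + 1 := ⟨a - 1, by omega⟩
      rw [bcoef_succ, bcoef_succ, show bcoef (a'+1+1) 0 = 0 by simp [bcoef]]
      simp [Nat.choose_self, pow_succ]
      try ring
    · obtain ⟨a', rfl⟩ : ∃ a', a = a' + 1 := ⟨a - 1, by omega⟩
      obtain ⟨c', rfl⟩ : ∃ c', c = c' + 1 := ⟨c - 1, by omega⟩
      rw [bcoef_succ, bcoef_succ, bcoef_succ]
      have hpascal : (a' + 1 + (c' + 1)).choose (a' + 1)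
          = (a' + (c' + 1)).choose a' + (a' + (c' + 1)).choose (a' + 1) := by
        have := Nat.choose_succ_succ (a' + c' + 1) a'
        rw [show a' + 1 + (c' + 1) = (a' + c' + 1) + 1 by omega,
          show a' + (c' + 1) = a' + c' + 1 by omega]
        exact this
      rw [hpascal, show a' + 1 + (c' + 1) = (a' + (c'+1)) + 1 by omega,
        show a' + 1 + c' = a' + c' + 1 by omega, show a' + (c'+1) = a' + c' + 1 by omega]
      push_cast
      ring

set_option maxHeartbeats 2000000 in
lemma single_bound
    (τ : ℝ) (hτ : 0 ≤ τ)
    (K₁ K₂ k₁ k₂ : ℕ) (hk₁ : 1 ≤ k₁) (hk₁K : k₁ ≤ K₁) (hk₂ : 1 ≤ k₂) (hk₂K : k₂ ≤ K₂)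
    (Cm Cp : ℝ) (hCm : 0 < Cm) (hCp : 0 < Cp)
    (A N V : H →L[ℂ] H) (q : ℝ) (li lj : ℂ) (w u : ℕ → H)
    (hLyap : WeakLyapunov A N V q τ)
    (hw0 : w 0 = 0) (hu0 : u 0 = 0)
    (hw : ∀ k, 1 ≤ k → k ≤ K₁ →
      (ContinuousLinearMap.adjoint A) (w k) = (starRingEnd ℂ) li • w k + w (k-1))
    (hu : ∀ k, 1 ≤ k → k ≤ K₂ →
      (ContinuousLinearMap.adjoint A) (u k) = (starRingEnd ℂ) lj • u k + u (k-1))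
    (hqi : Cm ≤ ‖li - (q:ℂ)‖) (hqj : Cm ≤ ‖lj - (q:ℂ)‖)
    (hN1 : Cm ≤ ‖⟪w 1, N (u 1)⟫‖)
    (hNnorm : ‖N‖ ≤ Cp)
    (hwnorm : ∀ k, 1 ≤ k → k ≤ K₁ → ‖w k‖ ≤ Cp)
    (hunorm : ∀ k, 1 ≤ k → k ≤ K₂ → ‖u k‖ ≤ Cp)
    (hli : ‖li‖ ≤ Cp) (hlj : ‖lj‖ ≤ Cp) (hqb : |q| ≤ Cp) (hre : li.re ≤ 0)
    (hsne : li + (starRingEnd ℂ) lj ≠ 0)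
    (hsm1 : ‖li + (starRingEnd ℂ) lj‖ ≤ 1)
    (hsm2 : ‖li + (starRingEnd ℂ) lj‖
      ≤ rconst τ Cm Cp / (2 * (Mconst τ K₁ (k₁+k₂) Cp + 1))) :
    rconst τ Cm Cp / 2 * (‖li + (starRingEnd ℂ) lj‖ ^ (k₁+k₂-1))⁻¹ ≤ ‖⟪w k₁, V (u k₂)⟫‖
    ∧ ‖⟪w k₁, V (u k₂)⟫‖
      ≤ (((k₁+k₂-2).choose (k₁-1) : ℝ) * Dconst τ K₁ Cp + Mconst τ K₁ (k₁+k₂) Cp)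
        * (‖li + (starRingEnd ℂ) lj‖ ^ (k₁+k₂-1))⁻¹ := by
  set s : ℂ := li + (starRingEnd ℂ) lj with hsdef
  set Vkl : ℕ → ℕ → ℂ := fun k l => ⟪w k, V (u l)⟫ with hVkl
  set E : H →L[ℂ] H := NormedSpace.exp ((τ:ℂ) • A) with hEdef
  set Rkl : ℕ → ℕ → ℂ := fun k l =>
    -⟪w k, E ((A - (q:ℂ) • (1 : H →L[ℂ] H))
        (N (((ContinuousLinearMap.adjoint A) - (q:ℂ) • (1 : H →L[ℂ] H)) (u l))))⟫ with hRkl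
  -- boundary values
  have hV0 : ∀ l, Vkl 0 l = 0 := by
    intro l; simp only [hVkl, hw0, inner_zero_left]
  have hV0' : ∀ k, Vkl k 0 = 0 := by
    intro k; simp only [hVkl, hu0, map_zero, inner_zero_right]
  -- recursion from the Lyapunov equation
  have hrec : ∀ k l, 1 ≤ k → k ≤ K₁ → 1 ≤ l → l ≤ K₂ →
      s * Vkl k l + Vkl (k-1) l + Vkl k (l-1) = Rkl k l := by
    intro k l hk1 hkK hl1 hlK
    have h := hLyap (w k) (u l)
    have e1 : ⟪w k, A (V (u l))⟫ = li * Vkl k l + Vkl (k-1) l := by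
      rw [← ContinuousLinearMap.adjoint_inner_left, hw k hk1 hkK, inner_add_left,
        inner_smul_left]
      simp only [Complex.conj_conj, hVkl]
    have e2 : ⟪w k, V ((ContinuousLinearMap.adjoint A) (u l))⟫
        = (starRingEnd ℂ) lj * Vkl k l + Vkl k (l-1) := by
      rw [hu l hl1 hlK, map_add, map_smul, inner_add_right, inner_smul_right]
      try simp only [hVkl]
    calc s * Vkl k l + Vkl (k-1) l + Vkl k (l-1)
        = (li * Vkl k l + Vkl (k-1) l)
          + ((starRingEnd ℂ) lj * Vkl k l + Vkl k (l-1)) := by rw [hsdef]; ring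
      _ = ⟪w k, A (V (u l))⟫ + ⟪w k, V ((ContinuousLinearMap.adjoint A) (u l))⟫ := by
          rw [e1, e2]
      _ = Rkl k l := h
  -- structural formula for the right-hand side
  have hAdjA : ContinuousLinearMap.adjoint (A - (q:ℂ) • (1 : H →L[ℂ] H))
      = ContinuousLinearMap.adjoint A - (q:ℂ) • (1 : H →L[ℂ] H) := by
    rw [← ContinuousLinearMap.star_eq_adjoint, star_sub, star_smul, star_one,
      ContinuousLinearMap.star_eq_adjoint, RCLike.star_def, Complex.conj_ofReal]
  have hAdjE : ContinuousLinearMap.adjoint E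
      = NormedSpace.exp ((τ:ℂ) • ContinuousLinearMap.adjoint A) := by
    rw [← ContinuousLinearMap.star_eq_adjoint, hEdef, NormedSpace.star_exp, star_smul,
      ContinuousLinearMap.star_eq_adjoint, RCLike.star_def, Complex.conj_ofReal]
  have happlyw : ∀ j, 1 ≤ j → j ≤ K₁ →
      ((ContinuousLinearMap.adjoint A) - (q:ℂ) • (1 : H →L[ℂ] H)) (w j)
        = ((starRingEnd ℂ) li - (q:ℂ)) • w j + w (j-1) := by
    intro j hj1 hjK
    rw [ContinuousLinearMap.sub_apply, hw j hj1 hjK, ContinuousLinearMap.smul_apply,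
      ContinuousLinearMap.one_apply, sub_smul]
    abel
  have happlyu : ∀ j, 1 ≤ j → j ≤ K₂ →
      ((ContinuousLinearMap.adjoint A) - (q:ℂ) • (1 : H →L[ℂ] H)) (u j)
        = ((starRingEnd ℂ) lj - (q:ℂ)) • u j + u (j-1) := by
    intro j hj1 hjK
    rw [ContinuousLinearMap.sub_apply, hu j hj1 hjK, ContinuousLinearMap.smul_apply,
      ContinuousLinearMap.one_apply, sub_smul]
    abel
  set cfun : ℕ → ℂ := fun m =>
    Complex.exp (τ * (starRingEnd ℂ) li) * (τ:ℂ)^m * ((m.factorial:ℂ))⁻¹ with hcfun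
  set zvec : ℕ → H := fun k => ∑ m ∈ Finset.range k,
    cfun m • (((starRingEnd ℂ) li - (q:ℂ)) • w (k-m) + w (k-m-1)) with hzvec
  set yvec : ℕ → H := fun l => ((starRingEnd ℂ) lj - (q:ℂ)) • u l + u (l-1) with hyvec
  have hadj : ∀ k l, 1 ≤ k → k ≤ K₁ → 1 ≤ l → l ≤ K₂ →
      Rkl k l = -⟪zvec k, N (yvec l)⟫ := by
    intro k l hk1 hkK hl1 hlK
    have h1 : Rkl k l
        = -⟪((ContinuousLinearMap.adjoint A) - (q:ℂ) • (1 : H →L[ℂ] H))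
              ((ContinuousLinearMap.adjoint E) (w k)),
            N (((ContinuousLinearMap.adjoint A) - (q:ℂ) • (1 : H →L[ℂ] H)) (u l))⟫ := by
      simp only [hRkl]
      rw [← ContinuousLinearMap.adjoint_inner_left E,
        ← ContinuousLinearMap.adjoint_inner_left (A - (q:ℂ) • (1 : H →L[ℂ] H)), hAdjA]
    rw [h1, hAdjE, exp_chain_s8 τ (ContinuousLinearMap.adjoint A) ((starRingEnd ℂ) li) K₁ w
      hw0 hw k hkK, map_sum, happlyu l hl1 hlK]
    simp only [hzvec, hyvec, hcfun]
    congr 1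
    congr 1
    refine Finset.sum_congr rfl fun m hm => ?_
    rw [map_smul, happlyw (k-m) (by simp at hm; omega) (by omega)]
  -- norm bounds
  have hCp0 : (0:ℝ) ≤ Cp := hCp.le
  have hwB : ∀ j, j ≤ K₁ → ‖w j‖ ≤ Cp := by
    intro j hj
    rcases Nat.eq_zero_or_pos j with rfl | hj1
    · simp [hw0, hCp0]
    · exact hwnorm j hj1 hj
  have huB : ∀ j, j ≤ K₂ → ‖u j‖ ≤ Cp := by
    intro j hj
    rcases Nat.eq_zero_or_pos j with rfl | hj1
    · simp [hu0, hCp0]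
    · exact hunorm j hj1 hj
  have hcB : ∀ m : ℕ, ‖cfun m‖ ≤ Real.exp τ := by
    intro m
    rw [hcfun]
    simp only
    rw [norm_mul, norm_mul, Complex.norm_exp, norm_pow, norm_inv,
      Complex.norm_natCast, Complex.norm_real, Real.norm_eq_abs, abs_of_nonneg hτ]
    have hre1 : (↑τ * (starRingEnd ℂ) li).re = τ * li.re := by
      simp [Complex.re_ofReal_mul]
    rw [hre1]
    have h1 : Real.exp (τ * li.re) ≤ 1 :=
      Real.exp_le_one_iff.mpr (mul_nonpos_iff.mpr (Or.inl ⟨hτ, hre⟩))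
    have h2 : τ^m * ((m.factorial:ℝ))⁻¹ ≤ Real.exp τ := by
      have h3 : τ^m / m.factorial ≤ ∑ i ∈ Finset.range (m+1), τ^i / i.factorial :=
        Finset.single_le_sum (f := fun i => τ^i / (i.factorial : ℝ))
          (fun i _ => by positivity) (Finset.self_mem_range_succ m)
      calc τ^m * ((m.factorial:ℝ))⁻¹ = τ^m / m.factorial := by rw [div_eq_mul_inv]
        _ ≤ _ := h3
        _ ≤ Real.exp τ := Real.sum_le_exp_of_nonneg hτ (m+1)
    calc Real.exp (τ * li.re) * τ^m * ((m.factorial:ℝ))⁻¹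
        = Real.exp (τ * li.re) * (τ^m * ((m.factorial:ℝ))⁻¹) := by ring
      _ ≤ 1 * Real.exp τ := by
          apply mul_le_mul h1 h2 (by positivity) zero_le_one
      _ = Real.exp τ := one_mul _
  have hlid : ‖(starRingEnd ℂ) li - (q:ℂ)‖ ≤ 2*Cp := by
    calc ‖(starRingEnd ℂ) li - (q:ℂ)‖ ≤ ‖(starRingEnd ℂ) li‖ + ‖(q:ℂ)‖ := norm_sub_le _ _
      _ = ‖li‖ + |q| := by rw [RCLike.norm_conj, Complex.norm_real, Real.norm_eq_abs]
      _ ≤ 2*Cp := by linarith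
  have hljd : ‖(starRingEnd ℂ) lj - (q:ℂ)‖ ≤ 2*Cp := by
    calc ‖(starRingEnd ℂ) lj - (q:ℂ)‖ ≤ ‖(starRingEnd ℂ) lj‖ + ‖(q:ℂ)‖ := norm_sub_le _ _
      _ = ‖lj‖ + |q| := by rw [RCLike.norm_conj, Complex.norm_real, Real.norm_eq_abs]
      _ ≤ 2*Cp := by linarith
  have hyB : ∀ l, 1 ≤ l → l ≤ K₂ → ‖yvec l‖ ≤ 2*Cp^2 + Cp := by
    intro l hl1 hlK
    rw [hyvec]
    simp only
    calc ‖((starRingEnd ℂ) lj - (q:ℂ)) • u l + u (l-1)‖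
        ≤ ‖((starRingEnd ℂ) lj - (q:ℂ)) • u l‖ + ‖u (l-1)‖ := norm_add_le _ _
      _ = ‖(starRingEnd ℂ) lj - (q:ℂ)‖ * ‖u l‖ + ‖u (l-1)‖ := by rw [norm_smul]
      _ ≤ (2*Cp) * Cp + Cp := by
          have := huB l hlK
          have := huB (l-1) (by omega)
          nlinarith [norm_nonneg ((starRingEnd ℂ) lj - (q:ℂ)), norm_nonneg (u l)]
      _ = 2*Cp^2 + Cp := by ring
  have hzBa : ∀ k, 1 ≤ k → k ≤ K₁ →
      ‖zvec k‖ ≤ (K₁:ℝ) * (Real.exp τ * (2*Cp^2 + Cp)) := by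
    intro k hk1 hkK
    rw [hzvec]
    simp only
    have hbd : ∀ m ∈ Finset.range k,
        ‖cfun m • (((starRingEnd ℂ) li - (q:ℂ)) • w (k-m) + w (k-m-1))‖
          ≤ Real.exp τ * (2*Cp^2 + Cp) := by
      intro m hm
      rw [norm_smul]
      have h1 := hcB m
      have h2 : ‖((starRingEnd ℂ) li - (q:ℂ)) • w (k-m) + w (k-m-1)‖ ≤ 2*Cp^2 + Cp := by
        calc ‖((starRingEnd ℂ) li - (q:ℂ)) • w (k-m) + w (k-m-1)‖
            ≤ ‖(starRingEnd ℂ) li - (q:ℂ)‖ * ‖w (k-m)‖ + ‖w (k-m-1)‖ := by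
              rw [← norm_smul]; exact norm_add_le _ _
          _ ≤ (2*Cp) * Cp + Cp := by
              have := hwB (k-m) (by omega)
              have := hwB (k-m-1) (by omega)
              nlinarith [norm_nonneg ((starRingEnd ℂ) li - (q:ℂ)), norm_nonneg (w (k-m))]
          _ = 2*Cp^2 + Cp := by ring
      exact mul_le_mul h1 h2 (norm_nonneg _) (Real.exp_nonneg _)
    calc ‖∑ m ∈ Finset.range k,
          cfun m • (((starRingEnd ℂ) li - (q:ℂ)) • w (k-m) + w (k-m-1))‖
        ≤ ∑ m ∈ Finset.range k, (Real.exp τ * (2*Cp^2 + Cp)) := norm_sum_le_of_le _ hbd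
      _ = (k:ℝ) * (Real.exp τ * (2*Cp^2 + Cp)) := by
        rw [Finset.sum_const, Finset.card_range, nsmul_eq_mul]
      _ ≤ (K₁:ℝ) * (Real.exp τ * (2*Cp^2 + Cp)) := by
        have hkK' : (k:ℝ) ≤ (K₁:ℝ) := by exact_mod_cast hkK
        have h0 : (0:ℝ) ≤ Real.exp τ * (2*Cp^2 + Cp) := by positivity
        nlinarith
  have hRbound : ∀ k l, 1 ≤ k → k ≤ K₁ → 1 ≤ l → l ≤ K₂ →
      ‖Rkl k l‖ ≤ Dconst τ K₁ Cp := by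
    intro k l hk1 hkK hl1 hlK
    rw [hadj k l hk1 hkK hl1 hlK, norm_neg]
    calc ‖⟪zvec k, N (yvec l)⟫‖ ≤ ‖zvec k‖ * ‖N (yvec l)‖ := norm_inner_le_norm _ _
      _ ≤ ((K₁:ℝ) * (Real.exp τ * (2*Cp^2 + Cp))) * (Cp * (2*Cp^2 + Cp)) := by
          have h1 := hzBa k hk1 hkK
          have h2 : ‖N (yvec l)‖ ≤ Cp * (2*Cp^2 + Cp) := by
            calc ‖N (yvec l)‖ ≤ ‖N‖ * ‖yvec l‖ := N.le_opNorm _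
              _ ≤ Cp * (2*Cp^2 + Cp) := by
                  have := hyB l hl1 hlK
                  nlinarith [norm_nonneg N, norm_nonneg (yvec l)]
          exact mul_le_mul h1 h2 (norm_nonneg _) (by positivity)
      _ = Dconst τ K₁ Cp := rfl
  -- lower bound for R11
  have hK1 : 1 ≤ K₁ := le_trans hk₁ hk₁K
  have hK2 : 1 ≤ K₂ := le_trans hk₂ hk₂K
  have hconji : ‖(starRingEnd ℂ) li - (q:ℂ)‖ = ‖li - (q:ℂ)‖ := by
    rw [show (starRingEnd ℂ) li - (q:ℂ) = (starRingEnd ℂ) (li - (q:ℂ)) by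
      rw [map_sub, Complex.conj_ofReal], RCLike.norm_conj]
  have hconjj : ‖(starRingEnd ℂ) lj - (q:ℂ)‖ = ‖lj - (q:ℂ)‖ := by
    rw [show (starRingEnd ℂ) lj - (q:ℂ) = (starRingEnd ℂ) (lj - (q:ℂ)) by
      rw [map_sub, Complex.conj_ofReal], RCLike.norm_conj]
  have hc0low : Real.exp (-(τ*Cp)) ≤ ‖cfun 0‖ := by
    rw [hcfun]
    simp only [pow_zero, mul_one, Nat.factorial_zero, Nat.cast_one, inv_one]
    rw [Complex.norm_exp]
    apply Real.exp_le_exp.mpr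
    have h1 : |li.re| ≤ ‖li‖ := by
      exact Complex.abs_re_le_norm li
    have h2 : -Cp ≤ li.re := by
      have := abs_le.mp h1
      linarith
    have hre1 : (↑τ * (starRingEnd ℂ) li).re = τ * li.re := by
      simp [Complex.re_ofReal_mul]
    rw [hre1]
    nlinarith
  have hR11 : rconst τ Cm Cp ≤ ‖Rkl 1 1‖ := by
    have e0 : zvec 1 = cfun 0 • (((starRingEnd ℂ) li - (q:ℂ)) • w 1) := by
      rw [hzvec]
      simp [Finset.sum_range_one, hw0]
    have e1 : yvec 1 = ((starRingEnd ℂ) lj - (q:ℂ)) • u 1 := by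
      rw [hyvec]
      simp [hu0]
    have e2 : Rkl 1 1 = -((starRingEnd ℂ) (cfun 0) *
        ((starRingEnd ℂ) ((starRingEnd ℂ) li - (q:ℂ)) *
          ((((starRingEnd ℂ) lj - (q:ℂ))) * ⟪w 1, N (u 1)⟫))) := by
      rw [hadj 1 1 le_rfl hK1 le_rfl hK2, e0, e1, map_smul, inner_smul_left,
        inner_smul_left, inner_smul_right]
    rw [e2, norm_neg, norm_mul, norm_mul, norm_mul, RCLike.norm_conj, RCLike.norm_conj,
      hconji, hconjj]
    have h1 : Cm * Cm ≤ ‖lj - (q:ℂ)‖ * ‖⟪w 1, N (u 1)⟫‖ :=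
      mul_le_mul hqj hN1 hCm.le (norm_nonneg _)
    have h2 : Cm * (Cm * Cm) ≤ ‖li - (q:ℂ)‖ * (‖lj - (q:ℂ)‖ * ‖⟪w 1, N (u 1)⟫‖) :=
      mul_le_mul hqi h1 (by positivity) (norm_nonneg _)
    have h3 : Real.exp (-(τ*Cp)) * (Cm * (Cm * Cm))
        ≤ ‖cfun 0‖ * (‖li - (q:ℂ)‖ * (‖lj - (q:ℂ)‖ * ‖⟪w 1, N (u 1)⟫‖)) :=
      mul_le_mul hc0low h2 (by positivity) (norm_nonneg _)
    have h4 : rconst τ Cm Cp = Real.exp (-(τ*Cp)) * (Cm * (Cm * Cm)) := by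
      rw [rconst]; ring
    linarith
  -- main induction
  have hD0 : 0 ≤ Dconst τ K₁ Cp := by
    rw [Dconst]
    positivity
  have hsnorm0 : 0 < ‖s‖ := norm_pos_iff.mpr hsne
  have key : ∀ n k l, k + l = n → k ≤ K₁ → l ≤ K₂ →
      ‖s^(k+l-1) * Vkl k l - (bcoef k l : ℂ) * Rkl 1 1‖
        ≤ Dconst τ K₁ Cp * 3^(k+l) * ‖s‖ := by
    intro n
    induction n using Nat.strong_induction_on with
    | _ n ih =>
      intro k l hn hkK hlK
      rcases Nat.eq_zero_or_pos k with rfl | hk1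
      · rw [hV0 l, mul_zero, show ((bcoef 0 l : ℤ) : ℂ) = 0 by simp [bcoef], zero_mul,
          sub_zero, norm_zero]
        positivity
      rcases Nat.eq_zero_or_pos l with rfl | hl1
      · rw [hV0' k, mul_zero, show ((bcoef k 0 : ℤ) : ℂ) = 0 by simp [bcoef], zero_mul,
          sub_zero, norm_zero]
        positivity
      by_cases h11 : k = 1 ∧ l = 1
      · obtain ⟨rfl, rfl⟩ := h11
        have h := hrec 1 1 le_rfl hkK le_rfl hlK
        rw [show (1:ℕ)-1 = 0 from rfl, hV0 1, hV0' 1] at h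
        have hb : ((bcoef 1 1 : ℤ) : ℂ) = 1 := by norm_num [bcoef]
        rw [show (1+1-1 : ℕ) = 1 from rfl, pow_one, hb, one_mul]
        have h5 : s * Vkl 1 1 - Rkl 1 1 = 0 := by linear_combination h
        rw [h5, norm_zero]
        positivity
      · have h3 : 3 ≤ k + l := by omega
        have hrec' := hrec k l hk1 hkK hl1 hlK
        set n' := k + l - 2 with hn'
        have hkl1 : k + l - 1 = n' + 1 := by omega
        have ihk := ih (n-1) (by omega) (k-1) l (by omega) (by omega) hlK
        have ihl := ih (n-1) (by omega) k (l-1) (by omega) hkK (by omega)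
        rw [show (k-1) + l - 1 = n' by omega, show (k-1) + l = n' + 1 by omega] at ihk
        rw [show k + (l-1) - 1 = n' by omega, show k + (l-1) = n' + 1 by omega] at ihl
        have hb : ((bcoef k l : ℤ) : ℂ)
            = -(((bcoef (k-1) l : ℤ) : ℂ) + ((bcoef k (l-1) : ℤ) : ℂ)) := by
          rw [bcoef_rec k l hk1 hl1 h3]
          push_cast
          ring
        have hide : s^(k+l-1) * Vkl k l - ((bcoef k l : ℤ) : ℂ) * Rkl 1 1
            = s^n' * Rkl k l
              - (s^n' * Vkl (k-1) l - ((bcoef (k-1) l : ℤ) : ℂ) * Rkl 1 1)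
              - (s^n' * Vkl k (l-1) - ((bcoef k (l-1) : ℤ) : ℂ) * Rkl 1 1) := by
          rw [hkl1, hb, pow_succ]
          linear_combination s^n' * hrec'
        rw [hide]
        have hsn : ‖s^n' * Rkl k l‖ ≤ Dconst τ K₁ Cp * ‖s‖ := by
          rw [norm_mul, norm_pow]
          have h4 : ‖s‖^n' ≤ ‖s‖ := by
            calc ‖s‖^n' ≤ ‖s‖^1 := pow_le_pow_of_le_one (norm_nonneg s) hsm1 (by omega)
              _ = ‖s‖ := pow_one _
          have h5 := hRbound k l hk1 hkK hl1 hlK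
          calc ‖s‖^n' * ‖Rkl k l‖ ≤ ‖s‖ * Dconst τ K₁ Cp :=
              mul_le_mul h4 h5 (norm_nonneg _) (norm_nonneg s)
            _ = Dconst τ K₁ Cp * ‖s‖ := mul_comm _ _
        calc ‖s^n' * Rkl k l
              - (s^n' * Vkl (k-1) l - ((bcoef (k-1) l : ℤ) : ℂ) * Rkl 1 1)
              - (s^n' * Vkl k (l-1) - ((bcoef k (l-1) : ℤ) : ℂ) * Rkl 1 1)‖
            ≤ ‖s^n' * Rkl k l
              - (s^n' * Vkl (k-1) l - ((bcoef (k-1) l : ℤ) : ℂ) * Rkl 1 1)‖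
              + ‖s^n' * Vkl k (l-1) - ((bcoef k (l-1) : ℤ) : ℂ) * Rkl 1 1‖ :=
            norm_sub_le _ _
          _ ≤ (‖s^n' * Rkl k l‖
              + ‖s^n' * Vkl (k-1) l - ((bcoef (k-1) l : ℤ) : ℂ) * Rkl 1 1‖)
              + ‖s^n' * Vkl k (l-1) - ((bcoef k (l-1) : ℤ) : ℂ) * Rkl 1 1‖ := by
            have := norm_sub_le (s^n' * Rkl k l)
              (s^n' * Vkl (k-1) l - ((bcoef (k-1) l : ℤ) : ℂ) * Rkl 1 1)
            linarith
          _ ≤ (Dconst τ K₁ Cp * ‖s‖ + Dconst τ K₁ Cp * 3^(n'+1) * ‖s‖)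
              + Dconst τ K₁ Cp * 3^(n'+1) * ‖s‖ := by
            have := add_le_add (add_le_add hsn ihk) ihl
            linarith
          _ ≤ Dconst τ K₁ Cp * 3^(k+l) * ‖s‖ := by
            rw [show k + l = n' + 2 by omega, show (3:ℝ)^(n'+2) = 3^(n'+1)*3 from pow_succ 3 (n'+1)]
            have h3pow : (1:ℝ) ≤ 3^(n'+1) := one_le_pow₀ (by norm_num)
            have hkey : 0 ≤ Dconst τ K₁ Cp * ‖s‖ * (3^(n'+1) - 1) := by
              apply mul_nonneg (mul_nonneg hD0 (norm_nonneg s))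
              linarith
            linarith [hkey]
  -- conclusion
  have hbnorm : ‖((bcoef k₁ k₂ : ℤ) : ℂ)‖ = ((k₁+k₂-2).choose (k₁-1) : ℝ) := by
    obtain ⟨a, rfl⟩ : ∃ a, k₁ = a + 1 := ⟨k₁ - 1, by omega⟩
    obtain ⟨c, rfl⟩ : ∃ c, k₂ = c + 1 := ⟨k₂ - 1, by omega⟩
    rw [bcoef_succ, show a+1+(c+1)-2 = a+c by omega, show a+1-1 = a by omega]
    push_cast
    rw [norm_mul, norm_pow, norm_neg, norm_one, one_pow, one_mul, Complex.norm_natCast]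
  have hBge1 : (1:ℝ) ≤ ((k₁+k₂-2).choose (k₁-1) : ℝ) := by
    have : 0 < (k₁+k₂-2).choose (k₁-1) := Nat.choose_pos (by omega)
    exact_mod_cast this
  have hMnD : Mconst τ K₁ (k₁+k₂) Cp = Dconst τ K₁ Cp * 3^(k₁+k₂) := rfl
  have hMn0 : 0 ≤ Mconst τ K₁ (k₁+k₂) Cp := by
    rw [hMnD]
    positivity
  have hr0 : 0 < rconst τ Cm Cp := by
    rw [rconst]
    positivity
  have hkey := key (k₁+k₂) k₁ k₂ rfl hk₁K hk₂K
  rw [← hMnD] at hkey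
  set m : ℕ := k₁ + k₂ - 1 with hm
  set b : ℂ := ((bcoef k₁ k₂ : ℤ) : ℂ) with hbdef
  set R : ℂ := Rkl 1 1 with hRdef
  set Mn : ℝ := Mconst τ K₁ (k₁+k₂) Cp with hMndef
  have hpm : 0 < ‖s‖^m := pow_pos hsnorm0 m
  have hbR : rconst τ Cm Cp ≤ ‖b * R‖ := by
    rw [norm_mul, hbnorm]
    nlinarith [hR11, hr0.le, norm_nonneg R]
  have hbRD : ‖b * R‖ ≤ ((k₁+k₂-2).choose (k₁-1) : ℝ) * Dconst τ K₁ Cp := by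
    rw [norm_mul, hbnorm]
    have := hRbound 1 1 le_rfl hK1 le_rfl hK2
    have h0 : (0:ℝ) ≤ ((k₁+k₂-2).choose (k₁-1) : ℝ) := by positivity
    exact mul_le_mul_of_nonneg_left this h0
  have hMns : Mn * ‖s‖ ≤ rconst τ Cm Cp / 2 := by
    have h2 : (0:ℝ) < 2*(Mn + 1) := by linarith
    calc Mn * ‖s‖ ≤ Mn * (rconst τ Cm Cp / (2*(Mn+1))) :=
        mul_le_mul_of_nonneg_left hsm2 hMn0
      _ = (Mn * rconst τ Cm Cp) / (2*(Mn+1)) := by ring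
      _ ≤ rconst τ Cm Cp / 2 := by
          rw [div_le_div_iff₀ h2 two_pos]
          nlinarith
  have hnorm_eq : ‖s^m * Vkl k₁ k₂‖ = ‖s‖^m * ‖Vkl k₁ k₂‖ := by
    rw [norm_mul, norm_pow]
  -- lower bound
  have hlow : rconst τ Cm Cp / 2 ≤ ‖s‖^m * ‖Vkl k₁ k₂‖ := by
    have h1 : ‖b * R‖ ≤ ‖s^m * Vkl k₁ k₂‖ + ‖s^m * Vkl k₁ k₂ - b * R‖ := by
      have e : b * R = s^m * Vkl k₁ k₂ - (s^m * Vkl k₁ k₂ - b * R) := by ring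
      calc ‖b * R‖ = ‖s^m * Vkl k₁ k₂ - (s^m * Vkl k₁ k₂ - b * R)‖ := by rw [← e]
        _ ≤ _ := norm_sub_le _ _
    rw [hnorm_eq] at h1
    linarith [hkey, hbR, hMns]
  -- upper bound
  have hhigh : ‖s‖^m * ‖Vkl k₁ k₂‖
      ≤ ((k₁+k₂-2).choose (k₁-1) : ℝ) * Dconst τ K₁ Cp + Mn := by
    have h1 : ‖s^m * Vkl k₁ k₂‖ ≤ ‖s^m * Vkl k₁ k₂ - b * R‖ + ‖b * R‖ := by
      have e : s^m * Vkl k₁ k₂ = (s^m * Vkl k₁ k₂ - b * R) + b * R := by ring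
      calc ‖s^m * Vkl k₁ k₂‖ = ‖(s^m * Vkl k₁ k₂ - b * R) + b * R‖ := by rw [← e]
        _ ≤ _ := norm_add_le _ _
    rw [hnorm_eq] at h1
    have h2 : Mn * ‖s‖ ≤ Mn * 1 := mul_le_mul_of_nonneg_left hsm1 hMn0
    linarith [hkey, hbRD]
  constructor
  · rw [← div_eq_mul_inv, div_le_iff₀ hpm]
    calc rconst τ Cm Cp / 2 ≤ ‖s‖^m * ‖Vkl k₁ k₂‖ := hlow
      _ = ‖Vkl k₁ k₂‖ * ‖s‖^m := mul_comm _ _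
  · rw [← div_eq_mul_inv, le_div_iff₀ hpm]
    calc ‖Vkl k₁ k₂‖ * ‖s‖^m = ‖s‖^m * ‖Vkl k₁ k₂‖ := mul_comm _ _
      _ ≤ _ := hhigh
end Helpers

/-- (Theorem 3.3(d), scaling law along generalized eigenfunctions.)
Along a family of weak Lyapunov solutions with adjoint Jordan chains for `conj(λᵢ(p))` and
`conj(λⱼ(p))`, uniform bounds as stated, and `s(p) := λᵢ(p) + conj(λⱼ(p)) ≠ 0` with
`s(p) → 0` as `p → p*⁻`, the pairing `|⟨w_{k₁}(p), V(p) u_{k₂}(p)⟩|` scales as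
`|s(p)|^{−(k₁+k₂−1)}` near `p*`. -/
theorem generalized_eigenfunction_scaling_law
    {H : Type*} [NormedAddCommGroup H] [InnerProductSpace ℂ H] [CompleteSpace H]
    (τ : ℝ) (hτ : 0 ≤ τ) (pstar : ℝ)
    (K₁ K₂ k₁ k₂ : ℕ) (hk₁ : 1 ≤ k₁) (hk₁K : k₁ ≤ K₁) (hk₂ : 1 ≤ k₂) (hk₂K : k₂ ≤ K₂)
    (Cm Cp : ℝ) (hCm : 0 < Cm) (hCp : 0 < Cp)
    (A N V : ℝ → (H →L[ℂ] H)) (q : ℝ → ℝ) (li lj : ℝ → ℂ)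
    (w u : ℝ → ℕ → H)
    (hLyap : ∀ p < pstar, WeakLyapunov (A p) (N p) (V p) (q p) τ)
    (hw0 : ∀ p < pstar, w p 0 = 0) (hu0 : ∀ p < pstar, u p 0 = 0)
    (hw : ∀ p < pstar, ∀ k, 1 ≤ k → k ≤ K₁ →
      (ContinuousLinearMap.adjoint (A p)) (w p k)
        = (starRingEnd ℂ) (li p) • w p k + w p (k - 1))
    (hu : ∀ p < pstar, ∀ k, 1 ≤ k → k ≤ K₂ →
      (ContinuousLinearMap.adjoint (A p)) (u p k)
        = (starRingEnd ℂ) (lj p) • u p k + u p (k - 1))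
    (hqi : ∀ p < pstar, Cm ≤ ‖li p - (q p : ℂ)‖)
    (hqj : ∀ p < pstar, Cm ≤ ‖lj p - (q p : ℂ)‖)
    (hN1 : ∀ p < pstar, Cm ≤ ‖⟪w p 1, (N p) (u p 1)⟫‖)
    (hNnorm : ∀ p < pstar, ‖N p‖ ≤ Cp)
    (hwnorm : ∀ p < pstar, ∀ k, 1 ≤ k → k ≤ K₁ → ‖w p k‖ ≤ Cp)
    (hunorm : ∀ p < pstar, ∀ k, 1 ≤ k → k ≤ K₂ → ‖u p k‖ ≤ Cp)
    (hli : ∀ p < pstar, ‖li p‖ ≤ Cp)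
    (hlj : ∀ p < pstar, ‖lj p‖ ≤ Cp)
    (hqb : ∀ p < pstar, |q p| ≤ Cp)
    (hre : ∀ p < pstar, (li p).re ≤ 0)
    (hs : ∀ p < pstar, li p + (starRingEnd ℂ) (lj p) ≠ 0)
    (hs0 : Tendsto (fun p => li p + (starRingEnd ℂ) (lj p))
      (nhdsWithin pstar (Set.Iio pstar)) (nhds 0)) :
    ∃ δ > 0, ∃ c C : ℝ, 0 < c ∧ c ≤ C ∧
      ∀ p : ℝ, pstar - δ < p → p < pstar →
        c * ‖li p + (starRingEnd ℂ) (lj p)‖ ^ (-((k₁ : ℤ) + (k₂ : ℤ) - 1))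
            ≤ ‖⟪w p k₁, (V p) (u p k₂)⟫‖
        ∧ ‖⟪w p k₁, (V p) (u p k₂)⟫‖
            ≤ C * ‖li p + (starRingEnd ℂ) (lj p)‖ ^ (-((k₁ : ℤ) + (k₂ : ℤ) - 1)) := by
  set Mn : ℝ := Mconst τ K₁ (k₁+k₂) Cp with hMndef
  set r : ℝ := rconst τ Cm Cp with hrdef
  set D : ℝ := Dconst τ K₁ Cp with hDdef
  set Cb : ℝ := ((k₁+k₂-2).choose (k₁-1) : ℝ) with hCbdef
  have hr0 : 0 < r := by rw [hrdef, rconst]; positivity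
  have hD0 : 0 < D := by
    rw [hDdef, Dconst]
    have : (0:ℝ) < (K₁:ℝ) := by
      have : 1 ≤ K₁ := le_trans hk₁ hk₁K
      exact_mod_cast Nat.lt_of_lt_of_le Nat.zero_lt_one this
    positivity
  have hMn0 : 0 ≤ Mn := by
    rw [hMndef, Mconst, ← hDdef]
    positivity
  have hCb1 : (1:ℝ) ≤ Cb := by
    rw [hCbdef]
    have : 0 < (k₁+k₂-2).choose (k₁-1) := Nat.choose_pos (by omega)
    exact_mod_cast this
  set ε : ℝ := min 1 (r / (2 * (Mn + 1))) with hεdef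
  have hε0 : 0 < ε := by
    apply lt_min one_pos
    positivity
  have hev : {p : ℝ | ‖li p + (starRingEnd ℂ) (lj p)‖ < ε}
      ∈ nhdsWithin pstar (Set.Iio pstar) := by
    have h1 := Metric.tendsto_nhds.mp hs0 ε hε0
    exact (by simpa [dist_zero_right] using h1 :
      ∀ᶠ x in nhdsWithin pstar (Set.Iio pstar), ‖li x + (starRingEnd ℂ) (lj x)‖ < ε)
  obtain ⟨δ, hδ0, hsub⟩ := Metric.mem_nhdsWithin_iff.mp hev
  refine ⟨δ, hδ0, min (r/2) (Cb * D + Mn), max (r/2) (Cb * D + Mn), ?_, min_le_max, ?_⟩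
  · apply lt_min (by positivity)
    nlinarith
  intro p hp1 hp2
  have hpball : p ∈ Metric.ball pstar δ ∩ Set.Iio pstar := by
    constructor
    · rw [Metric.mem_ball, Real.dist_eq, abs_lt]
      constructor <;> linarith
    · exact hp2
  have hsmall : ‖li p + (starRingEnd ℂ) (lj p)‖ < ε := hsub hpball
  have hsm1 : ‖li p + (starRingEnd ℂ) (lj p)‖ ≤ 1 :=
    le_trans hsmall.le (min_le_left _ _)
  have hsm2 : ‖li p + (starRingEnd ℂ) (lj p)‖ ≤ r / (2 * (Mn + 1)) :=
    le_trans hsmall.le (min_le_right _ _)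
  obtain ⟨hL, hU⟩ := single_bound τ hτ K₁ K₂ k₁ k₂ hk₁ hk₁K hk₂ hk₂K Cm Cp hCm hCp
    (A p) (N p) (V p) (q p) (li p) (lj p) (w p) (u p)
    (hLyap p hp2) (hw0 p hp2) (hu0 p hp2) (hw p hp2) (hu p hp2)
    (hqi p hp2) (hqj p hp2) (hN1 p hp2) (hNnorm p hp2) (hwnorm p hp2) (hunorm p hp2)
    (hli p hp2) (hlj p hp2) (hqb p hp2) (hre p hp2) (hs p hp2) hsm1 hsm2
  have hzp : ‖li p + (starRingEnd ℂ) (lj p)‖ ^ (-((k₁ : ℤ) + (k₂ : ℤ) - 1))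
      = (‖li p + (starRingEnd ℂ) (lj p)‖ ^ (k₁+k₂-1 : ℕ))⁻¹ := by
    rw [show -((k₁:ℤ)+(k₂:ℤ)-1) = -((k₁+k₂-1 : ℕ) : ℤ) by push_cast; omega,
      zpow_neg, zpow_natCast]
  have hinv0 : 0 ≤ (‖li p + (starRingEnd ℂ) (lj p)‖ ^ (k₁+k₂-1 : ℕ))⁻¹ := by positivity
  constructor
  · rw [hzp]
    calc min (r/2) (Cb * D + Mn) * (‖li p + (starRingEnd ℂ) (lj p)‖ ^ (k₁+k₂-1 : ℕ))⁻¹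
        ≤ (r/2) * (‖li p + (starRingEnd ℂ) (lj p)‖ ^ (k₁+k₂-1 : ℕ))⁻¹ :=
          mul_le_mul_of_nonneg_right (min_le_left _ _) hinv0
      _ ≤ _ := hL
  · rw [hzp]
    calc ‖⟪w p k₁, (V p) (u p k₂)⟫‖
        ≤ (Cb * D + Mn) * (‖li p + (starRingEnd ℂ) (lj p)‖ ^ (k₁+k₂-1 : ℕ))⁻¹ := hU
      _ ≤ max (r/2) (Cb * D + Mn)
            * (‖li p + (starRingEnd ℂ) (lj p)‖ ^ (k₁+k₂-1 : ℕ))⁻¹ :=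
          mul_le_mul_of_nonneg_right (le_max_right _ _) hinv0
end
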